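/- arXiv:1408.5025 — 5 statements merged into one kernel-verified Lean document; each statement's English description precedes it below -/
import Mathlib

section
/- Suppose ξ and η are continuous and piecewise differentiable functions on [a,b] with ξ(a) ≥ η(a) and ξ(b) ≥ η(b), the discontinuities of ξ' and η' are discrete, the inequality ξ(κ) ≤ η(κ) has a solution in (a,b), and ξ, η are differentiable at every such solution. Then there exists κ₀ ∈ (a,b) with ξ(κ₀) ≤ η(κ₀) and ξ'(κ₀) = η'(κ₀). -/
open Real Set

/-- If ξ, η are continuous on [a,b], differentiable off finite (discrete) exceptional sets,
ξ(a) ≥ η(a), ξ(b) ≥ η(b), the inequality ξ ≤ η has a solution in (a,b), and ξ, η are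
differentiable at every such solution, then there is κ₀ ∈ (a,b) with ξ(κ₀) ≤ η(κ₀)
and ξ'(κ₀) = η'(κ₀). -/
theorem key_proposition (a b : ℝ) (hab : a < b) (ξ η : ℝ → ℝ)
    (hξc : ContinuousOn ξ (Set.Icc a b)) (hηc : ContinuousOn η (Set.Icc a b))
    (Sξ Sη : Finset ℝ)
    (hξd : ∀ x ∈ Set.Ioo a b, x ∉ Sξ → DifferentiableAt ℝ ξ x)
    (hηd : ∀ x ∈ Set.Ioo a b, x ∉ Sη → DifferentiableAt ℝ η x)
    (ha : ξ a ≥ η a) (hb : ξ b ≥ η b)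
    (hsol : ∃ κ ∈ Set.Ioo a b, ξ κ ≤ η κ)
    (hdiff : ∀ κ ∈ Set.Ioo a b, ξ κ ≤ η κ →
      DifferentiableAt ℝ ξ κ ∧ DifferentiableAt ℝ η κ) :
    ∃ κ₀ ∈ Set.Ioo a b, ξ κ₀ ≤ η κ₀ ∧ deriv ξ κ₀ = deriv η κ₀ := by
  obtain ⟨κ, hκ, hκle⟩ := hsol
  set f : ℝ → ℝ := fun x => ξ x - η x with hf
  have hfc : ContinuousOn f (Set.Icc a b) := hξc.sub hηc
  obtain ⟨c, hc, hmin⟩ :=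
    (isCompact_Icc).exists_isMinOn (Set.nonempty_Icc.2 hab.le) hfc
  -- choose an interior minimizer
  have hκmem : κ ∈ Set.Icc a b := Set.Ioo_subset_Icc_self hκ
  have hfκ : f κ ≤ 0 := by simp [hf]; linarith
  obtain ⟨d, hd, hdmin⟩ : ∃ d ∈ Set.Ioo a b, IsMinOn f (Set.Icc a b) d := by
    rcases lt_or_ge (f c) 0 with hneg | hpos
    · refine ⟨c, ?_, hmin⟩
      rcases hc.1.lt_or_eq with h1 | h1
      · rcases hc.2.lt_or_eq with h2 | h2
        · exact ⟨h1, h2⟩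
        · exfalso; rw [h2] at hneg; simp [hf] at hneg; linarith
      · exfalso; rw [← h1] at hneg; simp [hf] at hneg; linarith
    · refine ⟨κ, hκ, fun x hx => ?_⟩
      have := hmin hκmem
      have h0 : f κ = 0 := le_antisymm hfκ (le_trans hpos this)
      calc f κ = 0 := h0
        _ ≤ f c := hpos
        _ ≤ f x := hmin hx
  -- d is a local min in the interior
  have hfd : f d ≤ 0 := le_trans (hdmin hκmem) hfκ
  have hled : ξ d ≤ η d := by simp [hf] at hfd; linarith
  obtain ⟨hdξ, hdη⟩ := hdiff d hd hled
  have hloc : IsLocalMin f d :=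
    hdmin.isLocalMin (Filter.mem_of_superset (isOpen_Ioo.mem_nhds hd)
      Set.Ioo_subset_Icc_self)
  have hderiv : deriv f d = 0 := hloc.deriv_eq_zero
  have : deriv f d = deriv ξ d - deriv η d := deriv_sub hdξ hdη
  exact ⟨d, hd, hled, by linarith [this ▸ hderiv]⟩
end

section
/- The function ĝ defined piecewise via arctan(4κ(κ²-1)/(κ⁴-6κ²+1)) with branch corrections 0, -π, -2π on the intervals [0, √2−1), (√2−1, √2+1), (√2+1, ∞) (and values -π/2, -3π/2 at κ = √2−1, √2+1) is differentiable on [0,∞) with ĝ'(κ) = -4/(κ²+1). -/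
open Real Set

noncomputable def ghat (κ : ℝ) : ℝ :=
  if κ < Real.sqrt 2 - 1 then
    Real.arctan (4 * κ * (κ^2 - 1) / (κ^4 - 6 * κ^2 + 1))
  else if κ = Real.sqrt 2 - 1 then -(π / 2)
  else if κ < Real.sqrt 2 + 1 then
    -π + Real.arctan (4 * κ * (κ^2 - 1) / (κ^4 - 6 * κ^2 + 1))
  else if κ = Real.sqrt 2 + 1 then -(3 * π / 2)
  else -(2 * π) + Real.arctan (4 * κ * (κ^2 - 1) / (κ^4 - 6 * κ^2 + 1))

lemma tan_four_arctan (x : ℝ) (hD : x^4 - 6*x^2 + 1 ≠ 0) :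
    Real.tan (4 * Real.arctan x) = 4*x*(1 - x^2) / (x^4 - 6*x^2 + 1) := by
  by_cases h1 : 1 - x^2 = 0
  · have hx : (x - 1) * (x + 1) = 0 := by linear_combination -h1
    rcases mul_eq_zero.1 hx with h | h
    · have hx1 : x = 1 := by linarith
      subst hx1
      rw [Real.arctan_one, show (4:ℝ) * (π/4) = π by ring, Real.tan_pi]
      norm_num
    · have hx1 : x = -1 := by linarith
      subst hx1
      rw [show ((-1:ℝ)) = -(1:ℝ) by norm_num, Real.arctan_neg, Real.arctan_one]
      rw [show (4:ℝ) * -(π/4) = -π by ring, Real.tan_neg, Real.tan_pi]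
      norm_num
  · have ht : Real.tan (2 * Real.arctan x) = 2*x/(1 - x^2) := by
      rw [Real.tan_two_mul, Real.tan_arctan]
    rw [show (4:ℝ) * Real.arctan x = 2*(2*Real.arctan x) by ring, Real.tan_two_mul, ht]
    have hs : 1 - (2*x/(1 - x^2))^2 = (x^4 - 6*x^2 + 1)/(1 - x^2)^2 := by
      field_simp
      ring
    rw [hs]
    field_simp
    ring

lemma tan_pi_div_eight : Real.tan (π/8) = Real.sqrt 2 - 1 := by
  have hpi := Real.pi_pos
  have h2 := Real.tan_two_mul (x := π/8)
  rw [show 2*(π/8) = π/4 by ring, Real.tan_pi_div_four] at h2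
  set t := Real.tan (π/8) with htdef
  have htpos : 0 < t := Real.tan_pos_of_pos_of_lt_pi_div_two (by linarith) (by linarith)
  have h1 : 1 - t^2 ≠ 0 := by
    intro h
    rw [h, div_zero] at h2
    norm_num at h2
  have heq : 1 - t^2 = 2*t := by
    field_simp at h2
    linarith
  have s2 : Real.sqrt 2 ^ 2 = 2 := Real.sq_sqrt (by norm_num)
  have spos : 0 < Real.sqrt 2 := Real.sqrt_pos.2 (by norm_num)
  have h3 : (t + 1 - Real.sqrt 2) * (t + 1 + Real.sqrt 2) = 0 := by
    linear_combination -heq - s2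
  rcases mul_eq_zero.1 h3 with h | h
  · linarith
  · linarith

lemma tan_three_pi_div_eight : Real.tan (3*π/8) = Real.sqrt 2 + 1 := by
  have s2 : Real.sqrt 2 ^ 2 = 2 := Real.sq_sqrt (by norm_num)
  rw [show 3*π/8 = π/2 - π/8 by ring, Real.tan_pi_div_two_sub, tan_pi_div_eight]
  exact inv_eq_of_mul_eq_one_right (by linear_combination s2)

lemma arctan_sqrt_two_sub_one : Real.arctan (Real.sqrt 2 - 1) = π/8 := by
  have hpi := Real.pi_pos
  rw [← tan_pi_div_eight, Real.arctan_tan (by linarith) (by linarith)]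

lemma arctan_sqrt_two_add_one : Real.arctan (Real.sqrt 2 + 1) = 3*π/8 := by
  have hpi := Real.pi_pos
  rw [← tan_three_pi_div_eight, Real.arctan_tan (by linarith) (by linarith)]

lemma ghat_eq (x : ℝ) (hx : 0 ≤ x) : ghat x = -4 * Real.arctan x := by
  have s2 : Real.sqrt 2 ^ 2 = 2 := Real.sq_sqrt (by norm_num)
  have spos : 1 < Real.sqrt 2 := by nlinarith [Real.sqrt_nonneg 2]
  have hpi := Real.pi_pos
  have ha0 : 0 ≤ Real.arctan x := by
    rw [← Real.arctan_zero]; exact Real.arctan_strictMono.monotone hx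
  have halt : Real.arctan x < π/2 := Real.arctan_lt_pi_div_two x
  unfold ghat
  rcases lt_trichotomy x (Real.sqrt 2 - 1) with h | h | h
  · rw [if_pos h]
    have hx2 : x^2 < (Real.sqrt 2 - 1)^2 := by
      nlinarith [mul_pos (by linarith : (0:ℝ) < Real.sqrt 2 - 1 - x)
        (by linarith : (0:ℝ) < Real.sqrt 2 - 1 + x)]
    have e1 : 0 < (3 - 2*Real.sqrt 2) - x^2 := by nlinarith
    have e2 : 0 < (3 + 2*Real.sqrt 2) - x^2 := by nlinarith
    have hD : 0 < x^4 - 6*x^2 + 1 := by nlinarith [mul_pos e1 e2]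
    have ha : Real.arctan x < π/8 := by
      rw [← arctan_sqrt_two_sub_one]; exact Real.arctan_strictMono h
    have key : 4*x*(x^2 - 1)/(x^4 - 6*x^2 + 1) = Real.tan (-4 * Real.arctan x) := by
      rw [show (-4:ℝ) * Real.arctan x = -(4 * Real.arctan x) by ring, Real.tan_neg,
        tan_four_arctan x hD.ne', ← neg_div]
      congr 1; ring
    rw [key, Real.arctan_tan (by linarith) (by linarith)]
  · rw [if_neg (by rw [h]; exact lt_irrefl _), if_pos h, h, arctan_sqrt_two_sub_one]
    ring
  · rw [if_neg (by linarith), if_neg (by intro h'; rw [h'] at h; linarith)]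
    have ha : π/8 < Real.arctan x := by
      rw [← arctan_sqrt_two_sub_one]; exact Real.arctan_strictMono h
    have hxpos : 0 < x := by linarith
    have hx2lo : (Real.sqrt 2 - 1)^2 < x^2 := by
      nlinarith [mul_pos (by linarith : (0:ℝ) < x - (Real.sqrt 2 - 1))
        (by linarith : (0:ℝ) < x + (Real.sqrt 2 - 1))]
    rcases lt_trichotomy x (Real.sqrt 2 + 1) with h2 | h2 | h2
    · rw [if_pos h2]
      have hx2hi : x^2 < (Real.sqrt 2 + 1)^2 := by
        nlinarith [mul_pos (by linarith : (0:ℝ) < Real.sqrt 2 + 1 - x)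
          (by linarith : (0:ℝ) < Real.sqrt 2 + 1 + x)]
      have e1 : 0 < x^2 - (3 - 2*Real.sqrt 2) := by nlinarith
      have e2 : 0 < (3 + 2*Real.sqrt 2) - x^2 := by nlinarith
      have hD : x^4 - 6*x^2 + 1 < 0 := by nlinarith [mul_pos e1 e2]
      have ha2 : Real.arctan x < 3*π/8 := by
        rw [← arctan_sqrt_two_add_one]; exact Real.arctan_strictMono h2
      have key : 4*x*(x^2 - 1)/(x^4 - 6*x^2 + 1) = Real.tan (π - 4 * Real.arctan x) := by
        rw [Real.tan_pi_sub, tan_four_arctan x hD.ne, ← neg_div]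
        congr 1; ring
      rw [key, Real.arctan_tan (by linarith) (by linarith)]
      ring
    · rw [if_neg (by rw [h2]; exact lt_irrefl _), if_pos h2, h2, arctan_sqrt_two_add_one]
      ring
    · rw [if_neg (by linarith), if_neg (by intro h'; rw [h'] at h2; linarith)]
      have hx2hi : (Real.sqrt 2 + 1)^2 < x^2 := by
        nlinarith [mul_pos (by linarith : (0:ℝ) < x - (Real.sqrt 2 + 1))
          (by linarith : (0:ℝ) < x + (Real.sqrt 2 + 1))]
      have e1 : 0 < x^2 - (3 - 2*Real.sqrt 2) := by nlinarith
      have e2 : 0 < x^2 - (3 + 2*Real.sqrt 2) := by nlinarith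
      have hD : 0 < x^4 - 6*x^2 + 1 := by nlinarith [mul_pos e1 e2]
      have ha2 : 3*π/8 < Real.arctan x := by
        rw [← arctan_sqrt_two_add_one]; exact Real.arctan_strictMono h2
      have key : 4*x*(x^2 - 1)/(x^4 - 6*x^2 + 1) = Real.tan (2*π - 4 * Real.arctan x) := by
        have hper : Real.tan (2*π - 4 * Real.arctan x)
            = Real.tan (-(4 * Real.arctan x)) := by
          rw [show 2*π - 4 * Real.arctan x = (-(4 * Real.arctan x) + π) + π by ring,
            Real.tan_periodic, Real.tan_periodic]
        rw [hper, Real.tan_neg, tan_four_arctan x hD.ne', ← neg_div]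
        congr 1; ring
      rw [key, Real.arctan_tan (by linarith) (by linarith)]
      ring

/-- The piecewise function ĝ is differentiable on [0,∞) with ĝ'(κ) = -4/(κ²+1). -/
theorem ghat_deriv (κ : ℝ) (hκ : 0 ≤ κ) :
    HasDerivWithinAt ghat (-4 / (κ^2 + 1)) (Set.Ici 0) κ := by
  have h : HasDerivAt (fun x => -4 * Real.arctan x) (-4 / (κ^2 + 1)) κ := by
    have := (Real.hasDerivAt_arctan κ).const_mul (-4 : ℝ)
    refine this.congr_deriv ?_
    have h0 : (1:ℝ) + κ^2 ≠ 0 := by positivity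
    field_simp
    ring
  exact h.hasDerivWithinAt.congr (fun x hx => ghat_eq x hx) (ghat_eq κ hκ)
end

section
/- At every κ > 0 where ψ_L is differentiable, ψ_L'(κ) = ψ_L(κ)·{L - [sin g_L(κ)/√((2 - cos g_L(κ))² - 1)]·g_L'(κ)}, and consequently ψ_L'(κ) ≥ -ψ_L(κ)·4/(κ²+1). -/
open Real Set

lemma sqrt_ident (t : ℝ) :
    Real.sqrt ((2 - Real.cos t)^2 - 1) =
      Real.sqrt 2 * |Real.sin (t/2)| * Real.sqrt (3 - Real.cos t) := by
  have h1 : Real.sin (t/2)^2 = 1/2 - Real.cos t / 2 := by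
    have := Real.sin_sq_eq_half_sub (t/2)
    rwa [show 2*(t/2) = t by ring] at this
  have h2 : (2 - Real.cos t)^2 - 1 = 2 * (Real.sin (t/2)^2 * (3 - Real.cos t)) := by
    rw [h1]; ring
  rw [h2, Real.sqrt_mul (by norm_num), Real.sqrt_mul (sq_nonneg _), Real.sqrt_sq_eq_abs,
    mul_assoc]

/-- If cos g(κ) = 1 then the sqrt part is not differentiable. -/
lemma sqrt_not_diff (L : ℝ) (hL : 0 < L) (κ : ℝ)
    (hc : Real.cos (L * κ + 4 * Real.arctan κ) = 1) :
    ¬ DifferentiableAt ℝ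
      (fun x : ℝ => Real.sqrt ((2 - Real.cos (L * x + 4 * Real.arctan x))^2 - 1)) κ := by
  intro hd
  set G : ℝ → ℝ := fun x => L * x + 4 * Real.arctan x with hG
  set s : ℝ → ℝ := fun x => Real.sqrt ((2 - Real.cos (G x))^2 - 1) with hs
  have hsκ : s κ = 0 := by
    simp only [hs, hG]
    rw [hc]; norm_num
  have hmin : IsLocalMin s κ := by
    apply Filter.Eventually.of_forall
    intro y
    rw [hsκ]; exact Real.sqrt_nonneg _
  have hderiv0 : HasDerivAt s 0 κ := by
    have := hmin.deriv_eq_zero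
    rw [← this]; exact hd.hasDerivAt
  have hslope0 : Filter.Tendsto (slope s κ) (nhdsWithin κ {κ}ᶜ) (nhds 0) :=
    hasDerivAt_iff_tendsto_slope.mp hderiv0
  -- derivative of φ = sin(G/2)
  have hG' : HasDerivAt G (L + 4 / (κ^2 + 1)) κ := by
    have h1 : HasDerivAt (fun x : ℝ => L * x) L κ := by
      simpa using (hasDerivAt_id κ).const_mul L
    have h2 : HasDerivAt (fun x : ℝ => 4 * Real.arctan x) (4 * (1/(1+κ^2))) κ :=
      (Real.hasDerivAt_arctan κ).const_mul 4
    have := h1.add h2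
    refine this.congr_deriv ?_
    rw [add_comm (1:ℝ) (κ^2)]
    ring
  set m : ℝ := Real.cos (G κ / 2) * ((L + 4 / (κ^2 + 1)) / 2) with hm
  have hφ : HasDerivAt (fun x => Real.sin (G x / 2)) m κ := by
    have hh : HasDerivAt (fun x => G x / 2) ((L + 4 / (κ^2 + 1)) / 2) κ := hG'.div_const 2
    have := hh.sin
    simpa [hm, mul_comm] using this
  have hφκ : Real.sin (G κ / 2) = 0 := by
    have h1 : Real.sin (G κ / 2)^2 = 0 := by
      have := Real.sin_sq_eq_half_sub (G κ / 2)
      rw [show 2*(G κ/2) = G κ by ring] at this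
      rw [this, hG]
      rw [hc]; norm_num
    exact pow_eq_zero_iff (by norm_num) |>.mp h1
  have hslopeφ : Filter.Tendsto (slope (fun x => Real.sin (G x / 2)) κ)
      (nhdsWithin κ {κ}ᶜ) (nhds m) := hasDerivAt_iff_tendsto_slope.mp hφ
  -- pointwise identity of |slope s| on punctured nbhd
  have hpt : ∀ y ∈ ({κ}ᶜ : Set ℝ), |slope s κ y| =
      Real.sqrt 2 * |slope (fun x => Real.sin (G x / 2)) κ y| * Real.sqrt (3 - Real.cos (G y)) := by
    intro y _
    rw [slope_def_field, slope_def_field, hsκ, hφκ, sub_zero, sub_zero]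
    rw [hs]
    simp only
    rw [sqrt_ident (G y)]
    rw [abs_div, abs_div, abs_mul, abs_mul]
    rw [abs_of_nonneg (Real.sqrt_nonneg 2), abs_of_nonneg (Real.sqrt_nonneg _), abs_abs]
    field_simp
  -- limits
  have hlim1 : Filter.Tendsto (fun y => |slope s κ y|) (nhdsWithin κ {κ}ᶜ) (nhds 0) := by
    have := hslope0.abs
    simpa using this
  have hcos : Filter.Tendsto (fun y => Real.sqrt (3 - Real.cos (G y)))
      (nhdsWithin κ {κ}ᶜ) (nhds (Real.sqrt 2)) := by
    have hcont : Continuous (fun y : ℝ => Real.sqrt (3 - Real.cos (G y))) := by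
      apply Real.continuous_sqrt.comp
      exact (continuous_const.sub ((Real.continuous_cos.comp
        ((continuous_const.mul continuous_id).add
          (continuous_const.mul Real.continuous_arctan)))))
    have h0 : Real.sqrt (3 - Real.cos (G κ)) = Real.sqrt 2 := by
      rw [hG]; simp only; rw [hc]; norm_num
    have ht : Filter.Tendsto (fun y : ℝ => Real.sqrt (3 - Real.cos (G y))) (nhds κ)
        (nhds (Real.sqrt (3 - Real.cos (G κ)))) := (hcont.continuousAt (x := κ)).tendsto
    rw [← h0]
    exact ht.mono_left nhdsWithin_le_nhds
  have hlim2 : Filter.Tendsto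
      (fun y => Real.sqrt 2 * |slope (fun x => Real.sin (G x / 2)) κ y|
        * Real.sqrt (3 - Real.cos (G y)))
      (nhdsWithin κ {κ}ᶜ) (nhds (Real.sqrt 2 * |m| * Real.sqrt 2)) :=
    ((Filter.Tendsto.const_mul _ hslopeφ.abs).mul hcos)
  have heq : Filter.Tendsto (fun y => |slope s κ y|)
      (nhdsWithin κ {κ}ᶜ) (nhds (Real.sqrt 2 * |m| * Real.sqrt 2)) := by
    apply hlim2.congr'
    filter_upwards [self_mem_nhdsWithin] with y hy
    exact (hpt y hy).symm
  have hne : (nhdsWithin κ ({κ}ᶜ : Set ℝ)).NeBot := inferInstance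
  have h0eq : (0 : ℝ) = Real.sqrt 2 * |m| * Real.sqrt 2 := tendsto_nhds_unique hlim1 heq
  have hsqrt2 : Real.sqrt 2 * Real.sqrt 2 = 2 := Real.mul_self_sqrt (by norm_num)
  have hm0 : |m| = 0 := by
    nlinarith [abs_nonneg m, Real.sqrt_nonneg 2]
  -- but m ≠ 0
  have hcosκ : Real.cos (G κ / 2)^2 = 1 := by
    have := Real.cos_sq (G κ / 2)
    rw [show 2*(G κ/2) = G κ by ring] at this
    rw [this, hG]; simp only; rw [hc]; norm_num
  have hgpos : 0 < L + 4 / (κ^2 + 1) := by positivity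
  have : m ≠ 0 := by
    rw [hm]
    intro h
    rcases mul_eq_zero.mp h with h1 | h2
    · rw [h1] at hcosκ; norm_num at hcosκ
    · have : L + 4 / (κ^2+1) = 0 := by linarith
      linarith
  exact this (abs_eq_zero.mp hm0)


/-- At every κ > 0 where ψ_L is differentiable,
ψ_L'(κ) = ψ_L(κ)·{L - [sin g_L(κ)/√((2-cos g_L(κ))²-1)]·g_L'(κ)}, and consequently
ψ_L'(κ) ≥ -ψ_L(κ)·4/(κ²+1). -/
theorem psi_deriv_formula (L : ℝ) (hL : 0 < L) (κ : ℝ) (hκ : 0 < κ)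
    (hdiff : DifferentiableAt ℝ (fun x : ℝ => Real.exp (L * x) *
      ((2 - Real.cos (L * x + 4 * Real.arctan x)) -
        Real.sqrt ((2 - Real.cos (L * x + 4 * Real.arctan x))^2 - 1))) κ) :
    deriv (fun x : ℝ => Real.exp (L * x) *
        ((2 - Real.cos (L * x + 4 * Real.arctan x)) -
          Real.sqrt ((2 - Real.cos (L * x + 4 * Real.arctan x))^2 - 1))) κ =
      (Real.exp (L * κ) *
        ((2 - Real.cos (L * κ + 4 * Real.arctan κ)) -
          Real.sqrt ((2 - Real.cos (L * κ + 4 * Real.arctan κ))^2 - 1))) *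
      (L - Real.sin (L * κ + 4 * Real.arctan κ) /
          Real.sqrt ((2 - Real.cos (L * κ + 4 * Real.arctan κ))^2 - 1) *
          (L + 4 / (κ^2 + 1))) ∧
    deriv (fun x : ℝ => Real.exp (L * x) *
        ((2 - Real.cos (L * x + 4 * Real.arctan x)) -
          Real.sqrt ((2 - Real.cos (L * x + 4 * Real.arctan x))^2 - 1))) κ ≥
      -(Real.exp (L * κ) *
        ((2 - Real.cos (L * κ + 4 * Real.arctan κ)) -
          Real.sqrt ((2 - Real.cos (L * κ + 4 * Real.arctan κ))^2 - 1))) *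
        (4 / (κ^2 + 1)) := by
  have hcne : Real.cos (L * κ + 4 * Real.arctan κ) ≠ 1 := by
    intro hc
    apply sqrt_not_diff L hL κ hc
    have hexp : DifferentiableAt ℝ (fun x : ℝ => Real.exp (-(L * x))) κ := by
      apply DifferentiableAt.exp
      exact ((differentiableAt_id.const_mul L).neg)
    have hh : DifferentiableAt ℝ (fun x : ℝ => Real.exp (-(L * x)) *
        (Real.exp (L * x) * ((2 - Real.cos (L * x + 4 * Real.arctan x)) -
          Real.sqrt ((2 - Real.cos (L * x + 4 * Real.arctan x))^2 - 1)))) κ :=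
      hexp.mul hdiff
    have hh' : DifferentiableAt ℝ (fun x : ℝ =>
        ((2 - Real.cos (L * x + 4 * Real.arctan x)) -
          Real.sqrt ((2 - Real.cos (L * x + 4 * Real.arctan x))^2 - 1))) κ := by
      have heq : (fun x : ℝ => Real.exp (-(L * x)) *
          (Real.exp (L * x) * ((2 - Real.cos (L * x + 4 * Real.arctan x)) -
            Real.sqrt ((2 - Real.cos (L * x + 4 * Real.arctan x))^2 - 1))))
          = (fun x : ℝ => ((2 - Real.cos (L * x + 4 * Real.arctan x)) -
            Real.sqrt ((2 - Real.cos (L * x + 4 * Real.arctan x))^2 - 1))) := by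
        funext x
        rw [← mul_assoc, ← Real.exp_add]
        simp
      rwa [heq] at hh
    have hcosdiff : DifferentiableAt ℝ
        (fun x : ℝ => 2 - Real.cos (L * x + 4 * Real.arctan x)) κ := by
      apply DifferentiableAt.sub (differentiableAt_const 2)
      apply Real.differentiable_cos.differentiableAt.comp
      exact ((differentiableAt_id.const_mul L).add
        ((Real.differentiable_arctan κ).const_mul 4))
    have hfin := hcosdiff.sub hh'
    refine hfin.congr_of_eventuallyEq (Filter.Eventually.of_forall fun x => ?_)
    simp only [Pi.sub_apply]
    ring
  set c := Real.cos (L * κ + 4 * Real.arctan κ) with hcdef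
  have hc1 : c ≤ 1 := Real.cos_le_one _
  have hclt : c < 1 := lt_of_le_of_ne hc1 hcne
  have hA : (1:ℝ) < 2 - c := by linarith
  have hu : (0:ℝ) < (2 - c)^2 - 1 := by nlinarith
  set su := Real.sqrt ((2 - c)^2 - 1) with hsu
  have hsupos : 0 < su := Real.sqrt_pos.mpr hu
  have hsusq : su^2 = (2-c)^2 - 1 := Real.sq_sqrt hu.le
  have hG' : HasDerivAt (fun x : ℝ => L * x + 4 * Real.arctan x) (L + 4 / (κ^2 + 1)) κ := by
    have h1 : HasDerivAt (fun x : ℝ => L * x) L κ := by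
      simpa using (hasDerivAt_id κ).const_mul L
    have h2 : HasDerivAt (fun x : ℝ => 4 * Real.arctan x) (4 * (1/(1+κ^2))) κ :=
      (Real.hasDerivAt_arctan κ).const_mul 4
    have h3 := h1.add h2
    refine h3.congr_deriv ?_
    rw [add_comm (1:ℝ) (κ^2)]
    ring
  set g' := L + 4 / (κ^2 + 1) with hg'
  set sg := Real.sin (L * κ + 4 * Real.arctan κ) with hsg
  have hA' : HasDerivAt (fun x : ℝ => 2 - Real.cos (L * x + 4 * Real.arctan x))
      (sg * g') κ := by
    have h1 := (hG'.cos)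
    have h2 := (hasDerivAt_const κ (2:ℝ)).sub h1
    refine h2.congr_deriv ?_
    rw [hsg]; ring
  have husq : HasDerivAt (fun x : ℝ => (2 - Real.cos (L * x + 4 * Real.arctan x))^2 - 1)
      (2 * (2 - c) * (sg * g')) κ := by
    have h1 := (hA'.pow 2).sub_const 1
    refine h1.congr_deriv ?_
    rw [hcdef]
    ring
  have hsqrt : HasDerivAt (fun x : ℝ =>
      Real.sqrt ((2 - Real.cos (L * x + 4 * Real.arctan x))^2 - 1))
      ((2 * (2 - c) * (sg * g')) / (2 * su)) κ := by
    have h1 := husq.sqrt (by simp only [← hcdef]; exact ne_of_gt hu)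
    exact h1
  have hexp : HasDerivAt (fun x : ℝ => Real.exp (L * x)) (L * Real.exp (L * κ)) κ := by
    have h1 : HasDerivAt (fun x : ℝ => L * x) L κ := by
      simpa using (hasDerivAt_id κ).const_mul L
    have h2 := h1.exp
    convert h2 using 1
    ring
  have hinner : HasDerivAt (fun x : ℝ =>
      ((2 - Real.cos (L * x + 4 * Real.arctan x)) -
        Real.sqrt ((2 - Real.cos (L * x + 4 * Real.arctan x))^2 - 1)))
      (sg * g' - (2 * (2 - c) * (sg * g')) / (2 * su)) κ := hA'.sub hsqrt
  have hψ : HasDerivAt (fun x : ℝ => Real.exp (L * x) *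
      ((2 - Real.cos (L * x + 4 * Real.arctan x)) -
        Real.sqrt ((2 - Real.cos (L * x + 4 * Real.arctan x))^2 - 1)))
      (L * Real.exp (L * κ) * ((2 - c) - su) +
        Real.exp (L * κ) * (sg * g' - (2 * (2 - c) * (sg * g')) / (2 * su))) κ := by
    have h1 := hexp.mul hinner
    refine h1.congr_deriv ?_
    rw [hsu, hcdef]
  have hderiv := hψ.deriv
  have hkey : deriv (fun x : ℝ => Real.exp (L * x) *
      ((2 - Real.cos (L * x + 4 * Real.arctan x)) -
        Real.sqrt ((2 - Real.cos (L * x + 4 * Real.arctan x))^2 - 1))) κ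
      = (Real.exp (L * κ) * ((2 - c) - su)) * (L - sg / su * g') := by
    rw [hderiv]
    have hsune : su ≠ 0 := ne_of_gt hsupos
    field_simp
    nlinarith [hsusq, Real.exp_pos (L * κ)]
  constructor
  · rw [hkey, hcdef, hsu, hsg, hg']
  · rw [hkey]
    have hbound : sg / su ≤ 1 := by
      rw [div_le_one hsupos]
      have hsq : sg^2 ≤ su^2 := by
        rw [hsusq]
        have hpy := Real.sin_sq_add_cos_sq (L * κ + 4 * Real.arctan κ)
        rw [← hsg, ← hcdef] at hpy
        nlinarith
      nlinarith [abs_nonneg sg, neg_abs_le sg, le_abs_self sg]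
    have hψpos : 0 < Real.exp (L * κ) * ((2 - c) - su) := by
      apply mul_pos (Real.exp_pos _)
      have hlt : su < 2 - c := by
        rw [hsu]
        have h2 : Real.sqrt ((2-c)^2 - 1) < Real.sqrt ((2-c)^2) := by
          apply Real.sqrt_lt_sqrt (by linarith) (by linarith)
        rwa [Real.sqrt_sq (by linarith)] at h2
      linarith
    have hg'pos : 0 < g' := by rw [hg']; positivity
    have hr : sg / su * g' ≤ g' := by
      have h1 := mul_le_mul_of_nonneg_right hbound hg'pos.le
      simpa using h1
    have hmono : L - sg / su * g' ≥ L - g' := by linarith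
    have h2 : (Real.exp (L * κ) * ((2 - c) - su)) * (L - sg / su * g')
        ≥ (Real.exp (L * κ) * ((2 - c) - su)) * (L - g') :=
      mul_le_mul_of_nonneg_left hmono hψpos.le
    calc (Real.exp (L * κ) * ((2 - c) - su)) * (L - sg / su * g')
        ≥ (Real.exp (L * κ) * ((2 - c) - su)) * (L - g') := h2
      _ = -(Real.exp (L * κ) * ((2 - c) - su)) * (4 / (κ^2+1)) := by
          rw [hg']; ring
      _ = _ := by rw [hcdef, hsu]
end

section
/- For fixed κ > 0, the function L ↦ ψ_L(κ) = e^{Lκ} f(cos g_L(κ)) is monotonically increasing in L, since ∂ψ_L(κ)/∂L = κ·ψ_L(κ)·{1 - sin g_L(κ)/√((2 - cos g_L(κ))² - 1)} ≥ 0 wherever defined. -/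
open Real Set

private lemma psi_hasDerivAt (κ a ε L : ℝ)
    (hv : 0 < (2 - Real.cos (L * κ + a))^2 - 1 + ε) :
    HasDerivAt (fun L : ℝ => Real.exp (L * κ) *
        ((2 - Real.cos (L * κ + a)) - Real.sqrt ((2 - Real.cos (L * κ + a))^2 - 1 + ε)))
      (κ * (Real.exp (L * κ) *
        ((2 - Real.cos (L * κ + a)) - Real.sqrt ((2 - Real.cos (L * κ + a))^2 - 1 + ε))) *
        (1 - Real.sin (L * κ + a) / Real.sqrt ((2 - Real.cos (L * κ + a))^2 - 1 + ε))) L := by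
  have hθ : HasDerivAt (fun L : ℝ => L * κ + a) κ L := by
    simpa using ((hasDerivAt_id L).mul_const κ).add_const a
  have hw : HasDerivAt (fun L : ℝ => 2 - Real.cos (L * κ + a))
      (Real.sin (L * κ + a) * κ) L := by
    have h1 := (Real.hasDerivAt_cos (L * κ + a)).comp L hθ
    have h2 := (hasDerivAt_const L (2:ℝ)).sub h1
    refine h2.congr_deriv ?_
    ring
  have hv' : HasDerivAt (fun L : ℝ => (2 - Real.cos (L * κ + a))^2 - 1 + ε)
      (2 * (2 - Real.cos (L * κ + a)) * (Real.sin (L * κ + a) * κ)) L := by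
    have := ((hw.pow 2).sub_const 1).add_const ε
    refine this.congr_deriv ?_
    norm_num
  have hs : HasDerivAt (fun L : ℝ => Real.sqrt ((2 - Real.cos (L * κ + a))^2 - 1 + ε))
      (1 / (2 * Real.sqrt ((2 - Real.cos (L * κ + a))^2 - 1 + ε)) *
        (2 * (2 - Real.cos (L * κ + a)) * (Real.sin (L * κ + a) * κ))) L :=
    (Real.hasDerivAt_sqrt hv.ne').comp L hv'
  have he : HasDerivAt (fun L : ℝ => Real.exp (L * κ)) (Real.exp (L * κ) * κ) L := by
    simpa [Function.comp_def] using (Real.hasDerivAt_exp (L * κ)).comp L ((hasDerivAt_id L).mul_const κ)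
  have htot := he.mul (hw.sub hs)
  refine htot.congr_deriv ?_
  have hsp : 0 < Real.sqrt ((2 - Real.cos (L * κ + a))^2 - 1 + ε) := Real.sqrt_pos.2 hv
  simp only [Pi.sub_apply]
  field_simp
  ring

private lemma psi_deriv_expr_nonneg (κ a ε L : ℝ) (hκ : 0 ≤ κ) (hε : 0 ≤ ε) (hε1 : ε ≤ 1) :
    0 ≤ κ * (Real.exp (L * κ) *
        ((2 - Real.cos (L * κ + a)) - Real.sqrt ((2 - Real.cos (L * κ + a))^2 - 1 + ε))) *
        (1 - Real.sin (L * κ + a) / Real.sqrt ((2 - Real.cos (L * κ + a))^2 - 1 + ε)) := by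
  set θ := L * κ + a
  set w := 2 - Real.cos θ with hw
  have hw1 : 1 ≤ w := by have := Real.cos_le_one θ; simp [hw]; linarith
  set s := Real.sqrt (w^2 - 1 + ε) with hs
  have hsw : s ≤ w := by
    have h1 : w^2 - 1 + ε ≤ w^2 := by linarith
    calc s ≤ Real.sqrt (w^2) := Real.sqrt_le_sqrt h1
    _ = w := Real.sqrt_sq (by linarith)
  have hsin : Real.sin θ ≤ s := by
    have h1 : Real.sin θ ≤ |Real.sin θ| := le_abs_self _
    have h2 : |Real.sin θ| = Real.sqrt (1 - Real.cos θ ^ 2) := by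
      rw [← Real.sin_sq θ, Real.sqrt_sq_eq_abs]
    have h3 : 1 - Real.cos θ ^ 2 ≤ w^2 - 1 + ε := by
      simp only [hw]; nlinarith [sq_nonneg (1 - Real.cos θ)]
    calc Real.sin θ ≤ |Real.sin θ| := h1
    _ = Real.sqrt (1 - Real.cos θ ^ 2) := h2
    _ ≤ s := Real.sqrt_le_sqrt h3
  have hfac : 0 ≤ 1 - Real.sin θ / s := by
    rcases eq_or_lt_of_le (Real.sqrt_nonneg (w^2 - 1 + ε) : (0:ℝ) ≤ s) with h | h
    · rw [hs, ← h, div_zero]; norm_num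
    · have := (div_le_one h).2 hsin
      linarith
  have hws : 0 ≤ w - s := by linarith
  have hexp : 0 ≤ Real.exp (L * κ) := (Real.exp_pos _).le
  exact mul_nonneg (mul_nonneg hκ (mul_nonneg hexp hws)) hfac

open Real Set

/-- For fixed κ > 0, L ↦ ψ_L(κ) is monotonically increasing on (0,∞), and wherever it
is differentiable its derivative equals
κ·ψ_L(κ)·{1 - sin g_L(κ)/√((2-cos g_L(κ))²-1)} ≥ 0. -/
theorem psi_monotone_in_L (κ : ℝ) (hκ : 0 < κ) :
    MonotoneOn (fun L : ℝ => Real.exp (L * κ) *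
      ((2 - Real.cos (L * κ + 4 * Real.arctan κ)) -
        Real.sqrt ((2 - Real.cos (L * κ + 4 * Real.arctan κ))^2 - 1)))
      (Set.Ioi 0) ∧
    ∀ L ∈ Set.Ioi (0:ℝ),
      DifferentiableAt ℝ (fun L : ℝ => Real.exp (L * κ) *
        ((2 - Real.cos (L * κ + 4 * Real.arctan κ)) -
          Real.sqrt ((2 - Real.cos (L * κ + 4 * Real.arctan κ))^2 - 1))) L →
      deriv (fun L : ℝ => Real.exp (L * κ) *
        ((2 - Real.cos (L * κ + 4 * Real.arctan κ)) -
          Real.sqrt ((2 - Real.cos (L * κ + 4 * Real.arctan κ))^2 - 1))) L =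
        κ * (Real.exp (L * κ) *
          ((2 - Real.cos (L * κ + 4 * Real.arctan κ)) -
            Real.sqrt ((2 - Real.cos (L * κ + 4 * Real.arctan κ))^2 - 1))) *
          (1 - Real.sin (L * κ + 4 * Real.arctan κ) /
            Real.sqrt ((2 - Real.cos (L * κ + 4 * Real.arctan κ))^2 - 1)) ∧
      0 ≤ deriv (fun L : ℝ => Real.exp (L * κ) *
        ((2 - Real.cos (L * κ + 4 * Real.arctan κ)) -
          Real.sqrt ((2 - Real.cos (L * κ + 4 * Real.arctan κ))^2 - 1))) L := by
  set a : ℝ := 4 * Real.arctan κ with ha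
  have hvpos : ∀ (ε z : ℝ), 0 < ε → 0 < (2 - Real.cos (z * κ + a))^2 - 1 + ε := by
    intro ε z hε
    nlinarith [Real.cos_le_one (z * κ + a), sq_nonneg (1 - Real.cos (z * κ + a))]
  constructor
  · -- Monotonicity, via smoothing parameter ε → 0⁺
    intro x hx y hy hxy
    have key : ∀ ε ∈ Set.Ioc (0:ℝ) 1,
        Real.exp (x * κ) * ((2 - Real.cos (x * κ + a)) -
          Real.sqrt ((2 - Real.cos (x * κ + a))^2 - 1 + ε)) ≤
        Real.exp (y * κ) * ((2 - Real.cos (y * κ + a)) -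
          Real.sqrt ((2 - Real.cos (y * κ + a))^2 - 1 + ε)) := by
      intro ε hε
      have mono : Monotone (fun L : ℝ => Real.exp (L * κ) *
          ((2 - Real.cos (L * κ + a)) - Real.sqrt ((2 - Real.cos (L * κ + a))^2 - 1 + ε))) := by
        apply monotone_of_deriv_nonneg
        · exact fun z => (psi_hasDerivAt κ a ε z (hvpos ε z hε.1)).differentiableAt
        · intro z
          rw [(psi_hasDerivAt κ a ε z (hvpos ε z hε.1)).deriv]
          exact psi_deriv_expr_nonneg κ a ε z hκ.le hε.1.le hε.2
      exact mono hxy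
    have lim : ∀ z : ℝ, Filter.Tendsto (fun ε : ℝ => Real.exp (z * κ) *
        ((2 - Real.cos (z * κ + a)) - Real.sqrt ((2 - Real.cos (z * κ + a))^2 - 1 + ε)))
        (nhdsWithin 0 (Set.Ioi 0))
        (nhds (Real.exp (z * κ) * ((2 - Real.cos (z * κ + a)) -
          Real.sqrt ((2 - Real.cos (z * κ + a))^2 - 1)))) := by
      intro z
      have hcont : Continuous (fun ε : ℝ => Real.exp (z * κ) *
          ((2 - Real.cos (z * κ + a)) - Real.sqrt ((2 - Real.cos (z * κ + a))^2 - 1 + ε))) := by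
        fun_prop
      have := (hcont.tendsto 0).mono_left (nhdsWithin_le_nhds (s := Set.Ioi (0:ℝ)))
      simpa using this
    refine le_of_tendsto_of_tendsto (lim x) (lim y) ?_
    filter_upwards [Ioc_mem_nhdsGT_of_mem (Set.mem_Ico.2 ⟨le_refl (0:ℝ), one_pos⟩)] with ε hε
    exact key ε hε
  · -- derivative formula wherever differentiable
    intro L hL hdiff
    by_cases h : (2 - Real.cos (L * κ + a))^2 - 1 = 0
    · -- corner point: the function is NOT differentiable here; derive a contradiction
      exfalso
      have hc1 : Real.cos (L * κ + a) = 1 := by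
        have := Real.cos_le_one (L * κ + a)
        nlinarith
      have hs0 : Real.sin (L * κ + a) = 0 := by
        have := Real.sin_sq_add_cos_sq (L * κ + a)
        nlinarith
      set q : ℝ → ℝ := fun z => Real.exp (z * κ) *
        Real.sqrt ((2 - Real.cos (z * κ + a))^2 - 1) with hq
      have hqd : DifferentiableAt ℝ q L := by
        have h2 : DifferentiableAt ℝ
            (fun z : ℝ => Real.exp (z * κ) * (2 - Real.cos (z * κ + a))) L := by fun_prop
        have h3 : q = fun z : ℝ => Real.exp (z * κ) * (2 - Real.cos (z * κ + a)) -
            Real.exp (z * κ) * ((2 - Real.cos (z * κ + a)) -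
              Real.sqrt ((2 - Real.cos (z * κ + a))^2 - 1)) := by
          funext z; simp [hq]; ring
        rw [h3]
        exact h2.sub hdiff
      have hq0 : q L = 0 := by simp [hq, h]
      have hqnn : ∀ z, 0 ≤ q z := fun z =>
        mul_nonneg (Real.exp_pos _).le (Real.sqrt_nonneg _)
      have hmin : IsLocalMin q L := Filter.Eventually.of_forall fun z => by
        rw [hq0]; exact hqnn z
      have hd0 : HasDerivAt q 0 L := by
        have := hmin.deriv_eq_zero
        rw [← this]
        exact hqd.hasDerivAt
      rw [hasDerivAt_iff_tendsto_slope] at hd0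
      have hd0' : Filter.Tendsto (slope q L) (nhdsWithin L (Set.Ioi L)) (nhds 0) :=
        hd0.mono_left (nhdsWithin_mono L fun z hz => ne_of_gt hz)
      set c0 : ℝ := Real.exp (L * κ) * (2 * κ / Real.pi) with hc0def
      have hπ := Real.pi_pos
      have hc0 : 0 < c0 := by positivity
      have hev : ∀ᶠ z in nhdsWithin L (Set.Ioi L), c0 ≤ slope q L z := by
        have hLlt : L < L + Real.pi / κ := by
          have : 0 < Real.pi / κ := by positivity
          linarith
        filter_upwards [Ioo_mem_nhdsGT_of_mem (Set.mem_Ico.2 ⟨le_refl L, hLlt⟩)] with z hz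
        obtain ⟨hz1, hz2⟩ := hz
        set x : ℝ := κ * (z - L) with hxdef
        have hx0 : 0 < x := by
          have : 0 < z - L := by linarith
          positivity
        have hxπ : x ≤ Real.pi := by
          have : z - L < Real.pi / κ := by linarith
          have := (lt_div_iff₀ hκ).1 (by linarith : z - L < Real.pi / κ)
          nlinarith
        have hcz : Real.cos (z * κ + a) = Real.cos x := by
          have hzx : z * κ + a = (L * κ + a) + x := by rw [hxdef]; ring
          rw [hzx, Real.cos_add, hc1, hs0]; ring
        have hub : Real.cos x ≤ 1 - 2 / Real.pi ^ 2 * x ^ 2 :=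
          Real.cos_le_one_sub_mul_cos_sq (by rw [abs_of_pos hx0]; exact hxπ)
        have huz : (2 * x / Real.pi)^2 ≤ (2 - Real.cos (z * κ + a))^2 - 1 := by
          rw [hcz]
          have hd : 2 / Real.pi ^ 2 * x ^ 2 ≤ 1 - Real.cos x := by linarith
          have he1 : (2 - Real.cos x)^2 - 1 =
              2 * (1 - Real.cos x) + (1 - Real.cos x)^2 := by ring
          have he2 : (2 * x / Real.pi)^2 = 2 * (2 / Real.pi ^ 2 * x ^ 2) := by
            field_simp
          nlinarith [sq_nonneg (1 - Real.cos x)]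
        have hsq : 2 * x / Real.pi ≤ Real.sqrt ((2 - Real.cos (z * κ + a))^2 - 1) := by
          have h0 : 0 ≤ 2 * x / Real.pi := by positivity
          calc 2 * x / Real.pi = Real.sqrt ((2 * x / Real.pi)^2) := (Real.sqrt_sq h0).symm
          _ ≤ _ := Real.sqrt_le_sqrt huz
        have hqz : c0 * (z - L) ≤ q z := by
          have hee : Real.exp (L * κ) ≤ Real.exp (z * κ) := by
            apply Real.exp_le_exp.2
            nlinarith
          have : c0 * (z - L) = Real.exp (L * κ) * (2 * x / Real.pi) := by
            rw [hc0def, hxdef]; field_simp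
          rw [this, hq]
          apply mul_le_mul hee hsq (by positivity) (Real.exp_pos _).le
        have hslope : slope q L z = q z / (z - L) := by
          rw [slope_def_field, hq0, sub_zero]
        rw [hslope]
        rw [le_div_iff₀ (by linarith : (0:ℝ) < z - L)]
        exact hqz
      have := ge_of_tendsto hd0' hev
      linarith
    · -- regular point: use the computed derivative (ε = 0)
      have hv0 : 0 < (2 - Real.cos (L * κ + a))^2 - 1 := by
        have h1 : 0 ≤ (2 - Real.cos (L * κ + a))^2 - 1 := by
          nlinarith [Real.cos_le_one (L * κ + a)]
        exact lt_of_le_of_ne h1 (Ne.symm h)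
      have hder := psi_hasDerivAt κ a 0 L (by rw [add_zero]; exact hv0)
      simp only [add_zero] at hder
      refine ⟨hder.deriv, ?_⟩
      rw [hder.deriv]
      have := psi_deriv_expr_nonneg κ a 0 L hκ.le le_rfl zero_le_one
      simpa using this
end

section
/- For all t ∈ (3π/2, 2π): (2 - cos t) - √((2 - cos t)² - 1) > (3 - cos t - 2√2·√(1 - cos t))/(1 + cos t). Equivalently, with c = cos t ∈ (0,1), (1-c)^{3/2} + (1+c)√(3-c) < 2√2. -/
open Real Set

lemma rpow_three_halves {x : ℝ} (hx : 0 ≤ x) : x ^ ((3:ℝ)/2) = x * Real.sqrt x := by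
  have h : x ^ ((3:ℝ)/2) = (x ^ (3:ℕ)) ^ ((1:ℝ)/2) := by
    rw [← Real.rpow_natCast x 3, ← Real.rpow_mul hx]; norm_num
  rw [h, ← Real.sqrt_eq_rpow]
  rw [show x ^ (3:ℕ) = x^2 * x by ring, Real.sqrt_mul (sq_nonneg x),
    Real.sqrt_sq hx]

lemma key_ineq {c : ℝ} (hc0 : 0 < c) (hc1 : c < 1) :
    (1 - c) ^ ((3:ℝ)/2) + (1 + c) * Real.sqrt (3 - c) < 2 * Real.sqrt 2 := by
  set a := Real.sqrt (1 - c) with ha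
  set b := Real.sqrt (3 - c) with hb
  set w := Real.sqrt 2 with hw
  have hs : (0:ℝ) < 1 - c := by linarith
  have ha2 : a^2 = 1 - c := Real.sq_sqrt hs.le
  have hb2 : b^2 = 3 - c := Real.sq_sqrt (by linarith)
  have hw2 : w^2 = 2 := Real.sq_sqrt (by norm_num)
  have ha0 : 0 < a := Real.sqrt_pos.mpr hs
  have hb0 : 0 < b := Real.sqrt_pos.mpr (by linarith)
  have hw0 : 0 < w := Real.sqrt_pos.mpr (by norm_num)
  have ha1 : a < 1 := by nlinarith
  have hw32 : w < 3/2 := by nlinarith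
  rw [rpow_three_halves hs.le, ← ha]
  -- key: a * (2*w + (1+c)*b) < 5 - c^2
  have h1 : 2*a < 1 + (1 - c) := by nlinarith [sq_nonneg (1 - a)]
  have h2 : 2*(a*b) ≤ (1 - c) + (3 - c) := by nlinarith [sq_nonneg (a - b)]
  have hkey : a * (2*w + (1+c)*b) < 5 - c^2 := by
    nlinarith [mul_pos hw0 (by linarith : (0:ℝ) < 1 + (1-c) - 2*a),
      mul_le_mul_of_nonneg_left h2 (by linarith : (0:ℝ) ≤ 1 + c)]
  have hT : 0 < 2*w + (1+c)*b := by positivity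
  have hfac : (2*w - (1+c)*b) * (2*w + (1+c)*b) = (1-c)*(5 - c^2) := by
    linear_combination 4*hw2 - (1+c)^2 * hb2
  have hmul : ((1-c) * a) * (2*w + (1+c)*b) < (2*w - (1+c)*b) * (2*w + (1+c)*b) := by
    rw [hfac]
    calc ((1-c) * a) * (2*w + (1+c)*b) = (1-c) * (a * (2*w + (1+c)*b)) := by ring
    _ < (1-c) * (5 - c^2) := by exact mul_lt_mul_of_pos_left hkey hs
  have := lt_of_mul_lt_mul_right hmul hT.le
  linarith

/-- For t ∈ (3π/2, 2π):
(2-cos t) - √((2-cos t)²-1) > (3 - cos t - 2√2·√(1-cos t))/(1+cos t); equivalently,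
with c = cos t ∈ (0,1), (1-c)^{3/2} + (1+c)√(3-c) < 2√2. -/
theorem f_gt_q_on_interval :
    (∀ t ∈ Set.Ioo (3 * π / 2) (2 * π),
      (2 - Real.cos t) - Real.sqrt ((2 - Real.cos t)^2 - 1) >
        (3 - Real.cos t - 2 * Real.sqrt 2 * Real.sqrt (1 - Real.cos t)) /
          (1 + Real.cos t)) ∧
    ∀ c ∈ Set.Ioo (0:ℝ) 1,
      (1 - c) ^ ((3:ℝ)/2) + (1 + c) * Real.sqrt (3 - c) < 2 * Real.sqrt 2 := by
  constructor
  · intro t ht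
    obtain ⟨ht1, ht2⟩ := ht
    have hpi := Real.pi_pos
    set c := Real.cos t with hcdef
    have hc0 : 0 < c := by
      rw [hcdef, ← Real.cos_sub_two_pi]
      exact Real.cos_pos_of_mem_Ioo ⟨by linarith, by linarith⟩
    have hc1 : c < 1 := by
      rw [hcdef, ← Real.cos_sub_two_pi]
      have : Real.cos (-(t - 2*π)) < Real.cos 0 :=
        Real.cos_lt_cos_of_nonneg_of_le_pi (le_refl 0) (by linarith) (by linarith)
      rw [Real.cos_neg, Real.cos_zero] at this
      exact this
    have hs : (0:ℝ) < 1 - c := by linarith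
    have hkey := key_ineq hc0 hc1
    rw [rpow_three_halves hs.le] at hkey
    set u := Real.sqrt (1 - c) with hu
    set v := Real.sqrt (3 - c) with hv
    have hu0 : 0 < u := Real.sqrt_pos.mpr hs
    have hu2 : u^2 = 1 - c := Real.sq_sqrt hs.le
    have hsq : Real.sqrt ((2 - c)^2 - 1) = u * v := by
      rw [show (2 - c)^2 - 1 = (1-c)*(3-c) by ring, Real.sqrt_mul hs.le]
    rw [hsq, gt_iff_lt, div_lt_iff₀ (by linarith : (0:ℝ) < 1 + c)]
    -- need: 3 - c - 2√2 u < ((2-c) - u v)(1+c)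
    -- from hkey * u: (1-c)*u^2 + (1+c)*u*v < 2√2 u, i.e. (1-c)^2 + (1+c) u v < 2√2 u
    have hmul : ((1-c) * u + (1+c) * v) * u < (2 * Real.sqrt 2) * u :=
      mul_lt_mul_of_pos_right hkey hu0
    nlinarith [hmul, hu2]
  · intro c hc
    exact key_ineq hc.1 hc.2
end
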